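/- Let X be a metric space, (Ω,𝓕,ℙ) a probability space with a random flow {θ_t}, and (ψ,Θ) a nonautonomous random dynamical system on X possessing a nonautonomous random attractor {𝒜(ω_τ) : ω_τ ∈ ℝ×Ω}. Let ξ* : ℝ×Ω → X be a global solution of (ψ,Θ) such that for each ω_τ the set {ξ*(Θ_t ω_τ) : t ≤ 0} is bounded. Then for every ω_τ ∈ ℝ×Ω, the time-0 section of the unstable set of ξ* is contained in the attractor: W^u(ξ*;ω_τ)(0) ⊆ 𝒜(ω_τ). -/

import Mathlib

open Filter Topology MeasureTheory

/-- If `(ψ, Θ)` is a nonautonomous random dynamical system with a nonautonomous random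
attractor `𝓐` and `ξ` is a global solution whose backwards trajectory is bounded at each
`ω_τ`, then the time-`0` section of the unstable set of `ξ` is contained in the attractor. -/
theorem unstable_set_subset_attractor
    {X : Type*} [MetricSpace X] {Ω : Type*} [MeasurableSpace Ω]
    (μ : Measure Ω) [IsProbabilityMeasure μ]
    -- random flow
    (θ : ℝ → Ω → Ω)
    (hθ0 : θ 0 = id)
    (hθadd : ∀ t s : ℝ, θ (t + s) = θ t ∘ θ s)
    (hθmeas : ∀ t : ℝ, Measurable (θ t))
    -- driving flow
    (Θ : ℝ → ℝ × Ω → ℝ × Ω)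
    (hΘ : ∀ (t : ℝ) (p : ℝ × Ω), Θ t p = (t + p.1, θ t p.2))
    -- nonautonomous random dynamical system (co-cycle)
    (ψ : ℝ → ℝ × Ω → X → X)
    (hψ0 : ∀ p : ℝ × Ω, ψ 0 p = id)
    (hψcoc : ∀ t s : ℝ, 0 ≤ t → 0 ≤ s → ∀ p : ℝ × Ω,
      ψ (t + s) p = ψ t (Θ s p) ∘ ψ s p)
    (hψcont : ∀ p : ℝ × Ω,
      ContinuousOn (fun q : ℝ × X => ψ q.1 p q.2) {q : ℝ × X | 0 ≤ q.1})
    -- the nonautonomous random attractor: nonempty compact sections,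
    (𝓐 : ℝ × Ω → Set X)
    (h𝓐comp : ∀ p : ℝ × Ω, IsCompact (𝓐 p))
    (h𝓐ne : ∀ p : ℝ × Ω, (𝓐 p).Nonempty)
    -- invariance,
    (h𝓐inv : ∀ t : ℝ, 0 ≤ t → ∀ p : ℝ × Ω, ψ t p '' 𝓐 p = 𝓐 (Θ t p))
    -- pullback attraction of bounded sets,
    (h𝓐attr : ∀ p : ℝ × Ω, ∀ B : Set X, Bornology.IsBounded B →
      ∀ ε > (0:ℝ), ∃ T : ℝ, ∀ t ≥ T, ∀ b ∈ B,
        Metric.infDist (ψ t (Θ (-t) p) b) (𝓐 p) < ε)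
    -- and minimality among closed pullback attracting families
    (h𝓐min : ∀ F : ℝ × Ω → Set X, (∀ p, IsClosed (F p)) →
      (∀ p : ℝ × Ω, ∀ B : Set X, Bornology.IsBounded B →
        ∀ ε > (0:ℝ), ∃ T : ℝ, ∀ t ≥ T, ∀ b ∈ B,
          Metric.infDist (ψ t (Θ (-t) p) b) (F p) < ε) →
      ∀ p : ℝ × Ω, 𝓐 p ⊆ F p)
    -- a global solution of the co-cycle with bounded backwards trajectory
    (ξ : ℝ × Ω → X)
    (hξ : ∀ t : ℝ, 0 ≤ t → ∀ p : ℝ × Ω, ψ t p (ξ p) = ξ (Θ t p))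
    (hξbdd : ∀ p : ℝ × Ω,
      Bornology.IsBounded ((fun t : ℝ => ξ (Θ t p)) '' Set.Iic (0:ℝ)))
    -- the sections of the unstable set of `ξ`
    (Wu : ℝ × Ω → ℝ → Set X)
    (hWu : ∀ (p : ℝ × Ω) (t : ℝ), Wu p t =
      {z : X | ∃ ζ : ℝ → X,
        (∀ a b : ℝ, b ≤ a → ψ (a - b) (Θ b p) (ζ b) = ζ a) ∧
        ζ t = z ∧
        Tendsto (fun s => dist (ζ s) (ξ (Θ s p))) atBot (𝓝 0)})
    (p : ℝ × Ω) :
    Wu p 0 ⊆ 𝓐 p := by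

  intro z hz
  rw [hWu] at hz
  obtain ⟨ζ, hζ, hζ0, htend⟩ := hz
  have h1 : ∀ᶠ s in atBot, dist (ζ s) (ξ (Θ s p)) < 1 :=
    htend.eventually_lt_const one_pos
  obtain ⟨S₀, hS₀⟩ := eventually_atBot.mp h1
  set S := min S₀ 0 with hS
  have hS0 : S ≤ 0 := min_le_right _ _
  have hSS : ∀ s ≤ S, dist (ζ s) (ξ (Θ s p)) < 1 := fun s hs =>
    hS₀ s (hs.trans (min_le_left _ _))
  have hb1 : Bornology.IsBounded (ζ '' Set.Iic S) := by
    refine ((hξbdd p).thickening (δ := 1)).subset ?_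
    rintro _ ⟨s, hs, rfl⟩
    rw [Metric.mem_thickening_iff]
    exact ⟨ξ (Θ s p), ⟨s, hs.trans hS0, rfl⟩, hSS s hs⟩
  have hb2 : Bornology.IsBounded (ζ '' Set.Icc S 0) := by
    have hcont : ContinuousOn (fun s : ℝ => ψ (s - S) (Θ S p) (ζ S)) (Set.Icc S 0) := by
      refine (hψcont (Θ S p)).comp
        (Continuous.continuousOn
          (((continuous_id.sub continuous_const).prodMk continuous_const :
            Continuous fun s : ℝ => (s - S, ζ S)))) ?_
      intro s hs
      simp only [Set.mem_setOf_eq, id_eq, Pi.sub_apply]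
      linarith [hs.1]
    have heq : ζ '' Set.Icc S 0 = (fun s : ℝ => ψ (s - S) (Θ S p) (ζ S)) '' Set.Icc S 0 :=
      Set.image_congr fun s hs => (hζ s S hs.1).symm
    rw [heq]
    exact (isCompact_Icc.image_of_continuousOn hcont).isBounded
  have hB : Bornology.IsBounded (ζ '' Set.Iic 0) := by
    have hU : Set.Iic (0:ℝ) = Set.Iic S ∪ Set.Icc S 0 := by
      ext x
      simp only [Set.mem_Iic, Set.mem_union, Set.mem_Icc]
      constructor
      · intro hx; rcases le_total x S with h | h
        · exact Or.inl h
        · exact Or.inr ⟨h, hx⟩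
      · rintro (h | h)
        · exact h.trans hS0
        · exact h.2
    rw [hU, Set.image_union]
    exact hb1.union hb2
  have key : ∀ ε > (0:ℝ), Metric.infDist z (𝓐 p) < ε := by
    intro ε hε
    obtain ⟨T, hT⟩ := h𝓐attr p _ hB ε hε
    set t := max T 0 with ht
    have ht0 : (0:ℝ) ≤ t := le_max_right _ _
    have h2 : ψ t (Θ (-t) p) (ζ (-t)) = z := by
      have h3 := hζ 0 (-t) (by linarith)
      rw [hζ0] at h3
      simpa using h3
    have hmem : ζ (-t) ∈ ζ '' Set.Iic 0 := ⟨-t, by simp [ht0], rfl⟩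
    have := hT t (le_max_left _ _) _ hmem
    rwa [h2] at this
  have hz0 : Metric.infDist z (𝓐 p) = 0 := by
    by_contra h
    exact lt_irrefl _ (key _ (lt_of_le_of_ne Metric.infDist_nonneg (Ne.symm h)))
  exact ((h𝓐comp p).isClosed.mem_iff_infDist_zero (h𝓐ne p)).mpr hz0
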